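/- Let D be a triangulated category and F = (E, M) a normal triangulated torsion theory. Then the pair (0/E, Σ(M/0)) is a t-structure on D, where 0/E = {X : (0 → X) ∈ E} and M/0 = {X : (X → 0) ∈ M}. -/

import Mathlib

open CategoryTheory Category Limits Pretriangulated ZeroObject

universe v u w

section Defs

variable {D : Type u} [Category.{v} D] [HasZeroObject D] [Preadditive D]
  [HasShift D ℤ] [∀ n : ℤ, (shiftFunctor D n).Additive] [Pretriangulated D]

/-- Homotopy orthogonality (Def. 1.1): conditions (HO1) and (HO2), stated for every
completion of `e` and `m` to distinguished triangles. -/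
def HOrth {E₀ E₁ M₀ M₁ : D} (e : E₀ ⟶ E₁) (m : M₀ ⟶ M₁) : Prop :=
  ∀ (Ce : D) (αe : E₁ ⟶ Ce) (βe : Ce ⟶ E₀⟦(1:ℤ)⟧),
    Triangle.mk e αe βe ∈ (distTriang D) →
    ∀ (Cm : D) (αm : M₁ ⟶ Cm) (βm : Cm ⟶ M₀⟦(1:ℤ)⟧),
      Triangle.mk m αm βm ∈ (distTriang D) →
      (∀ φ : Ce ⟶ Cm⟦(-1:ℤ)⟧,
        αe ≫ φ ≫ βm⟦(-1:ℤ)⟧' ≫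
          (shiftFunctorCompIsoId D (1:ℤ) (-1:ℤ) (by omega)).hom.app M₀ = 0) ∧
      Function.Injective (fun φ : Ce ⟶ Cm => αe ≫ φ ≫ βm)

/-- The right homotopy-orthogonal class `E^⊥`. -/
def rightOrth (E : MorphismProperty D) : MorphismProperty D :=
  fun _ _ m => ∀ ⦃A B : D⦄ (e : A ⟶ B), E e → HOrth e m

/-- The left homotopy-orthogonal class `^⊥M`. -/
def leftOrth (M : MorphismProperty D) : MorphismProperty D :=
  fun _ _ e => ∀ ⦃A B : D⦄ (m : A ⟶ B), M m → HOrth e m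

/-- The 3-for-2 property for a class of morphisms. -/
def ThreeForTwo (P : MorphismProperty D) : Prop :=
  ∀ ⦃X Y Z : D⦄ (f : X ⟶ Y) (g : Y ⟶ Z),
    (P f → P g → P (f ≫ g)) ∧ (P f → P (f ≫ g) → P g) ∧ (P g → P (f ≫ g) → P f)

/-- A triangulated pre-factorization system (Def. 1.12(1)). -/
structure IsTriPFS (E M : MorphismProperty D) : Prop where
  right_eq : rightOrth E = M
  left_eq : leftOrth M = E
  shiftE : ∀ ⦃X Y : D⦄ (f : X ⟶ Y), E f → E (f⟦(1:ℤ)⟧')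

/-- A triangulated factorization system (Def. 1.12(2)). -/
structure IsTriFS (E M : MorphismProperty D) extends IsTriPFS E M : Prop where
  fact : ∀ ⦃X Y : D⦄ (f : X ⟶ Y),
    ∃ (P : D) (e : X ⟶ P) (m : P ⟶ Y), E e ∧ M m ∧ e ≫ m = f

/-- A normal triangulated torsion theory (Defs. 1.15, 1.16). -/
structure IsNormalTTT (E M : MorphismProperty D) extends IsTriFS E M : Prop where
  three_E : ThreeForTwo E
  three_M : ThreeForTwo M
  normal : ∀ ⦃X T : D⦄ (e : X ⟶ T) (m : T ⟶ (0:D)), E e → M m →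
    ∀ ⦃R : D⦄ (r : R ⟶ X) (δ : T ⟶ R⟦(1:ℤ)⟧),
      Triangle.mk r e δ ∈ (distTriang D) → E (0 : R ⟶ (0:D))

/-- A middling good morphism of triangles (Neeman): one extending to a 3×3 diagram
whose rows and columns are distinguished triangles, all squares commuting except
the lower-right one, which anticommutes. -/
def MiddlingGood {A₀ B₀ C₀ A₁ B₁ C₁ : D}
    (φ₀ : A₀ ⟶ B₀) (ψ₀ : B₀ ⟶ C₀) (δ₀ : C₀ ⟶ A₀⟦(1:ℤ)⟧)
    (φ₁ : A₁ ⟶ B₁) (ψ₁ : B₁ ⟶ C₁) (δ₁ : C₁ ⟶ A₁⟦(1:ℤ)⟧)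
    (a : A₀ ⟶ A₁) (b : B₀ ⟶ B₁) (c : C₀ ⟶ C₁) : Prop :=
  ∃ (Ca Cb Cc : D)
    (αa : A₁ ⟶ Ca) (βa : Ca ⟶ A₀⟦(1:ℤ)⟧)
    (αb : B₁ ⟶ Cb) (βb : Cb ⟶ B₀⟦(1:ℤ)⟧)
    (αc : C₁ ⟶ Cc) (βc : Cc ⟶ C₀⟦(1:ℤ)⟧)
    (fa : Ca ⟶ Cb) (fb : Cb ⟶ Cc) (δ : Cc ⟶ Ca⟦(1:ℤ)⟧),
    Triangle.mk a αa βa ∈ (distTriang D) ∧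
    Triangle.mk b αb βb ∈ (distTriang D) ∧
    Triangle.mk c αc βc ∈ (distTriang D) ∧
    Triangle.mk fa fb δ ∈ (distTriang D) ∧
    φ₁ ≫ αb = αa ≫ fa ∧
    ψ₁ ≫ αc = αb ≫ fb ∧
    δ₁ ≫ αa⟦(1:ℤ)⟧' = αc ≫ δ ∧
    βa ≫ φ₀⟦(1:ℤ)⟧' = fa ≫ βb ∧
    βb ≫ ψ₀⟦(1:ℤ)⟧' = fb ≫ βc ∧
    δ ≫ βa⟦(1:ℤ)⟧' = -(βc ≫ δ₀⟦(1:ℤ)⟧')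

end Defs

/-- A t-structure on a triangulated category (Def. 2.1), together with choices of the
truncation functors `τ^{≤0}` (right adjoint to the inclusion of `D^{≤0}`) and
`τ^{≥1}` (left adjoint to the inclusion of `D^{≥1}`).  Here `ge` is `D^{≥0}` and
membership of `X` in `D^{≥1} = Σ⁻¹ D^{≥0}` is expressed as `X⟦1⟧ ∈ ge`. -/
structure TData (D : Type u) [Category.{v} D] [HasZeroObject D] [Preadditive D]
    [HasShift D ℤ] [∀ n : ℤ, (shiftFunctor D n).Additive] [Pretriangulated D] where
  le : Set D
  ge : Set D
  le_iso : ∀ ⦃X Y : D⦄, (X ≅ Y) → X ∈ le → Y ∈ le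
  ge_iso : ∀ ⦃X Y : D⦄, (X ≅ Y) → X ∈ ge → Y ∈ ge
  shift_le : ∀ ⦃X : D⦄, X ∈ le → X⟦(1:ℤ)⟧ ∈ le
  shift_ge : ∀ ⦃X : D⦄, X⟦(1:ℤ)⟧ ∈ ge → X ∈ ge
  hom_zero : ∀ ⦃X Y : D⦄ (f : X ⟶ Y), X ∈ le → Y⟦(1:ℤ)⟧ ∈ ge → f = 0
  tri : ∀ X : D, ∃ (A B : D) (i : A ⟶ X) (p : X ⟶ B) (δ : B ⟶ A⟦(1:ℤ)⟧),
    A ∈ le ∧ B⟦(1:ℤ)⟧ ∈ ge ∧ Triangle.mk i p δ ∈ (distTriang D)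
  tle : D ⥤ D
  σ : tle ⟶ 𝟭 D
  tle_mem : ∀ X : D, tle.obj X ∈ le
  tle_univ : ∀ ⦃A : D⦄, A ∈ le → ∀ X : D,
    Function.Bijective (fun g : A ⟶ tle.obj X => g ≫ σ.app X)
  tge : D ⥤ D
  ρ : 𝟭 D ⟶ tge
  tge_mem : ∀ X : D, (tge.obj X)⟦(1:ℤ)⟧ ∈ ge
  tge_univ : ∀ X : D, ∀ ⦃B : D⦄, B⟦(1:ℤ)⟧ ∈ ge →
    Function.Bijective (fun g : tge.obj X ⟶ B => ρ.app X ≫ g)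

section TDefs

variable {D : Type u} [Category.{v} D] [HasZeroObject D] [Preadditive D]
  [HasShift D ℤ] [∀ n : ℤ, (shiftFunctor D n).Additive] [Pretriangulated D]

/-- `E_t`: morphisms `φ` with `τ^{≥1} φ` invertible. -/
def Et (t : TData D) : MorphismProperty D := fun _ _ φ => IsIso (t.tge.map φ)

/-- `M_t`: morphisms `φ` with `τ^{≤0} φ` invertible. -/
def Mt (t : TData D) : MorphismProperty D := fun _ _ φ => IsIso (t.tle.map φ)

end TDefs

section Statements

variable {D : Type u} [Category.{v} D] [HasZeroObject D] [Preadditive D]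
  [HasShift D ℤ] [∀ n : ℤ, (shiftFunctor D n).Additive] [Pretriangulated D]

/-- The contractible triangle `X ⟶ 0 ⟶ X⟦1⟧`. -/
lemma Tm_dist (X : D) :
    Triangle.mk (0 : X ⟶ (0:D)) (0 : (0:D) ⟶ X⟦(1:ℤ)⟧) (-(𝟙 X)⟦(1:ℤ)⟧') ∈ distTriang D :=
  rot_of_distTriang _ (contractible_distinguished X)

/-- The contractible triangle `0 ⟶ X ⟶ X ⟶ 0⟦1⟧`. -/
lemma Te_dist (Y : D) :
    Triangle.mk (0 : (0:D) ⟶ Y) (𝟙 Y) (0 : Y ⟶ (0:D)⟦(1:ℤ)⟧) ∈ distTriang D := by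
  refine isomorphic_distinguished _
    (inv_rot_of_distTriang _ (contractible_distinguished Y)) _ ?_
  refine Triangle.isoMk _ _
    ((isZero_zero D).iso ((shiftFunctor D (-1:ℤ)).map_isZero (isZero_zero D)))
    (Iso.refl _) (Iso.refl _) ?_ ?_ ?_
  · apply (isZero_zero D).eq_of_src
  · simp [contractibleTriangle]
    rfl
  · apply ((shiftFunctor D (1:ℤ)).map_isZero
      ((shiftFunctor D (-1:ℤ)).map_isZero (isZero_zero D))).eq_of_tgt

/-- Isomorphisms belong to `E`. -/
lemma iso_mem_E {E M : MorphismProperty D} (h : IsNormalTTT E M)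
    {X Y : D} (f : X ⟶ Y) [IsIso f] : E f := by
  rw [← h.left_eq]
  intro A B m hm Ce αe βe hTe Cm αm βm hTm
  have hz : IsZero Ce := (Triangle.mk f αe βe).isZero₃_of_isIso₁ hTe ‹IsIso f›
  constructor
  · intro φ
    rw [hz.eq_of_src φ 0, zero_comp, comp_zero]
  · intro φ ψ _
    exact hz.eq_of_src φ ψ

/-- Isomorphisms belong to `M`. -/
lemma iso_mem_M {E M : MorphismProperty D} (h : IsNormalTTT E M)
    {X Y : D} (f : X ⟶ Y) [IsIso f] : M f := by
  rw [← h.right_eq]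
  intro A B e he Ce αe βe hTe Cm αm βm hTm
  have hz : IsZero Cm := (Triangle.mk f αm βm).isZero₃_of_isIso₁ hTm ‹IsIso f›
  have hz' : IsZero (Cm⟦(-1:ℤ)⟧) := (shiftFunctor D (-1:ℤ)).map_isZero hz
  constructor
  · intro φ
    simp [hz'.eq_of_tgt φ 0]
  · intro φ ψ _
    exact hz.eq_of_tgt φ ψ

/-- Hom-vanishing: maps from `0/E` to `M/0` vanish. -/
lemma hom_zero_of_mem {E M : MorphismProperty D} (h : IsNormalTTT E M)
    {X Y : D} (f : X ⟶ Y) (hX : E (0 : (0:D) ⟶ X)) (hY : M (0 : Y ⟶ (0:D))) :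
    f = 0 := by
  have hX' : leftOrth M (0 : (0:D) ⟶ X) := by rw [h.left_eq]; exact hX
  obtain ⟨H1, _⟩ := hX' _ hY X (𝟙 X) 0 (Te_dist X)
    (Y⟦(1:ℤ)⟧) 0 (-(𝟙 Y)⟦(1:ℤ)⟧') (Tm_dist Y)
  have := H1 (f ≫ (shiftFunctorCompIsoId D (1:ℤ) (-1:ℤ) (by omega)).inv.app Y)
  simpa using this

/-- `0/E` is closed under `⟦1⟧`. -/
lemma shift_L {E M : MorphismProperty D} (h : IsNormalTTT E M)
    (X : D) (hX : E (0 : (0:D) ⟶ X)) : E (0 : (0:D) ⟶ X⟦(1:ℤ)⟧) := by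
  have h1 : E ((0 : (0:D) ⟶ X)⟦(1:ℤ)⟧') := h.shiftE _ hX
  rw [Functor.map_zero] at h1
  have hiso : E ((isZero_zero D).iso
      ((shiftFunctor D (1:ℤ)).map_isZero (isZero_zero D))).hom := iso_mem_E h _
  have h2 := (h.three_E ((isZero_zero D).iso
      ((shiftFunctor D (1:ℤ)).map_isZero (isZero_zero D))).hom
      (0 : ((0:D)⟦(1:ℤ)⟧) ⟶ X⟦(1:ℤ)⟧)).1 hiso h1
  rwa [comp_zero] at h2

/-- The Sator lemma: `(A ⟶ 0) ∈ E` implies `(0 ⟶ A) ∈ E`. -/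
lemma sator {E M : MorphismProperty D} (h : IsNormalTTT E M)
    (A : D) (hA : E (0 : A ⟶ (0:D))) : E (0 : (0:D) ⟶ A) := by
  have hid : E (𝟙 (0:D)) := iso_mem_E h _
  have hcomp : (0 : (0:D) ⟶ A) ≫ (0 : A ⟶ (0:D)) = 𝟙 (0:D) :=
    (isZero_zero D).eq_of_src _ _
  exact (h.three_E (0 : (0:D) ⟶ A) (0 : A ⟶ (0:D))).2.2 hA (by rw [hcomp]; exact hid)

/-- Truncation triangles exist. -/
lemma trunc {E M : MorphismProperty D} (h : IsNormalTTT E M) (X : D) :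
    ∃ (A B : D) (i : A ⟶ X) (p : X ⟶ B) (δ : B ⟶ A⟦(1:ℤ)⟧),
      E (0 : (0:D) ⟶ A) ∧ M (0 : B ⟶ (0:D)) ∧ Triangle.mk i p δ ∈ (distTriang D) := by
  obtain ⟨P, e, m, he, hm, -⟩ := h.fact (0 : X ⟶ (0:D))
  have hm0 : M (0 : P ⟶ (0:D)) := by
    have hm' : m = 0 := (isZero_zero D).eq_of_tgt m 0
    rwa [hm'] at hm
  obtain ⟨Q, α, β, hT⟩ := distinguished_cocone_triangle e
  have hT' : Triangle.mk ((Triangle.mk e α β).invRotate.mor₁) e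
      ((Triangle.mk e α β).invRotate.mor₃) ∈ distTriang D :=
    inv_rot_of_distTriang _ hT
  have hnorm : E (0 : ((Triangle.mk e α β).invRotate.obj₁) ⟶ (0:D)) :=
    h.normal e m he hm ((Triangle.mk e α β).invRotate.mor₁)
      ((Triangle.mk e α β).invRotate.mor₃) hT'
  exact ⟨(Triangle.mk e α β).invRotate.obj₁, P,
    (Triangle.mk e α β).invRotate.mor₁, e, (Triangle.mk e α β).invRotate.mor₃,
    sator h _ hnorm, hm0, hT'⟩

/-- `M/0` is closed under retracts. -/
lemma M0_of_retract {E M : MorphismProperty D} (h : IsNormalTTT E M)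
    {W B : D} (p : W ⟶ B) (q : B ⟶ W) (hpq : p ≫ q = 𝟙 W)
    (hB : M (0 : B ⟶ (0:D))) : M (0 : W ⟶ (0:D)) := by
  have hB' : rightOrth E (0 : B ⟶ (0:D)) := by rw [h.right_eq]; exact hB
  rw [← h.right_eq]
  intro A' B' e he Ce αe βe hTe Cm αm βm hTm
  obtain ⟨H1, H2⟩ := hB' e he Ce αe βe hTe (B⟦(1:ℤ)⟧) 0 (-(𝟙 B)⟦(1:ℤ)⟧') (Tm_dist B)
  have hzB : ∀ χ : Ce ⟶ B, αe ≫ χ = 0 := by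
    intro χ
    have := H1 (χ ≫ (shiftFunctorCompIsoId D (1:ℤ) (-1:ℤ) (by omega)).inv.app B)
    simpa using this
  have hinjB : ∀ χ χ' : Ce ⟶ B⟦(1:ℤ)⟧, αe ≫ χ = αe ≫ χ' → χ = χ' := by
    intro χ χ' hχ
    have : αe ≫ χ ≫ (-(𝟙 B)⟦(1:ℤ)⟧') = αe ≫ χ' ≫ (-(𝟙 B)⟦(1:ℤ)⟧') := by
      simpa using hχ
    exact H2 this
  have hzW : ∀ χ : Ce ⟶ W, αe ≫ χ = 0 := by
    intro χ
    have h1 := hzB (χ ≫ p)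
    have h2 : αe ≫ χ = (αe ≫ (χ ≫ p)) ≫ q := by
      rw [assoc, assoc, hpq, comp_id]
    rw [h2, h1, zero_comp]
  have hinjW : ∀ χ χ' : Ce ⟶ W⟦(1:ℤ)⟧, αe ≫ χ = αe ≫ χ' → χ = χ' := by
    intro χ χ' hχ
    have h5 : χ ≫ p⟦(1:ℤ)⟧' = χ' ≫ p⟦(1:ℤ)⟧' := by
      apply hinjB
      rw [← assoc, ← assoc, hχ]
    have h6 := congrArg (fun t => t ≫ q⟦(1:ℤ)⟧') h5
    simpa [← Functor.map_comp, hpq] using h6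
  haveI hβ : IsIso βm :=
    ((Triangle.mk (0 : W ⟶ (0:D)) αm βm).isZero₂_iff_isIso₃ hTm).1 (isZero_zero D)
  constructor
  · intro φ
    have := hzW (φ ≫ βm⟦(-1:ℤ)⟧' ≫
      (shiftFunctorCompIsoId D (1:ℤ) (-1:ℤ) (by omega)).hom.app W)
    simpa using this
  · intro φ ψ hφψ
    dsimp at hφψ
    have h3 : φ ≫ βm = ψ ≫ βm := hinjW _ _ hφψ
    exact (cancel_mono βm).1 h3

/-- `M/0` is closed under `⟦-1⟧`. -/
lemma shift_G {E M : MorphismProperty D} (h : IsNormalTTT E M)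
    (X : D) (hX : M (0 : X ⟶ (0:D))) : M (0 : X⟦(-1:ℤ)⟧ ⟶ (0:D)) := by
  obtain ⟨A, B, i, p, δ, hA, hB, hT⟩ := trunc h (X⟦(-1:ℤ)⟧)
  have hi : i = 0 := by
    have hA1 : E (0 : (0:D) ⟶ A⟦(1:ℤ)⟧) := shift_L h A hA
    have hf : i⟦(1:ℤ)⟧' ≫
        (shiftFunctorCompIsoId D (-1:ℤ) (1:ℤ) (by omega)).hom.app X = 0 :=
      hom_zero_of_mem h _ hA1 hX
    have h4 : i⟦(1:ℤ)⟧' = 0 := by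
      rw [← cancel_mono ((shiftFunctorCompIsoId D (-1:ℤ) (1:ℤ) (by omega)).hom.app X),
        zero_comp]
      exact hf
    apply (shiftFunctor D (1:ℤ)).map_injective
    rw [h4, Functor.map_zero]
  obtain ⟨q, hq⟩ := Triangle.yoneda_exact₂ _ hT (𝟙 (X⟦(-1:ℤ)⟧)) (by simp [hi]; exact comp_id _)
  exact M0_of_retract h p q hq.symm hB

/-- Lemma 2.10: for a normal triangulated torsion theory `(E, M)`, the pair
`(0/E, Σ(M/0))` is a t-structure: Hom-vanishing (with `D^{≥1} = M/0`), the two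
shift-closure conditions, and the existence of truncation triangles. -/
theorem normalTTT_gives_tStructure (E M : MorphismProperty D) (h : IsNormalTTT E M) :
    (∀ ⦃X Y : D⦄ (f : X ⟶ Y), E (0 : (0:D) ⟶ X) → M (0 : Y ⟶ (0:D)) → f = 0) ∧
    (∀ X : D, E (0 : (0:D) ⟶ X) → E (0 : (0:D) ⟶ X⟦(1:ℤ)⟧)) ∧
    (∀ X : D, M (0 : X ⟶ (0:D)) → M (0 : X⟦(-1:ℤ)⟧ ⟶ (0:D))) ∧
    (∀ X : D, ∃ (A B : D) (i : A ⟶ X) (p : X ⟶ B) (δ : B ⟶ A⟦(1:ℤ)⟧),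
      E (0 : (0:D) ⟶ A) ∧ M (0 : B ⟶ (0:D)) ∧ Triangle.mk i p δ ∈ (distTriang D)) := by
  exact ⟨fun X Y f hX hY => hom_zero_of_mem h f hX hY,
    fun X => shift_L h X, fun X => shift_G h X, fun X => trunc h X⟩

end Statements
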